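/- Let G be a finite connected simple graph, let s ≠ t be vertices, let N > 0 be the number of spanning trees of G, and for adjacent vertices a, b let N_{s,t}(a,b) be the number of spanning trees T of G in which the unique path from s to t in T traverses the edge {a,b} in the direction from a to b. Define f(a,b) := (N_{s,t}(a,b) − N_{s,t}(b,a))/N for each ordered pair of adjacent vertices. Then f is a unit electrical flow from s to t satisfying the Kirchhoff laws: (i) (current law) for every vertex v, ∑_{b adjacent to v} f(v,b) equals 1 if v = s, equals −1 if v = t, and equals 0 otherwise; and (ii) (voltage law, for unit resistances) for every closed walk v₀, v₁, …, v_k = v₀ in G, ∑_{i=0}^{k−1} f(v_i, v_{i+1}) = 0. -/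

import Mathlib

open SimpleGraph

variable {V : Type*}

/-- `T` is a spanning tree of `G`. -/
def IsSpanningTreeOf (T G : SimpleGraph V) : Prop := T ≤ G ∧ T.IsTree

/-- The unique path from `s` to `t` in the tree `T` traverses the edge `{a,b}`
in the direction from `a` to `b`. -/
def PathTraverses (T : SimpleGraph V) (s t a b : V) : Prop :=
  ∃ p : T.Walk s t, p.IsPath ∧ ∃ d ∈ p.darts, d.toProd = (a, b)

namespace KirchAux
attribute [local instance] Classical.propDecidable


lemma dart_fst_ne_end {T : SimpleGraph V} {u v : V} {p : T.Walk u v}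
    (h : p.support.Nodup) {d : T.Dart} (hd : d ∈ p.darts) : d.fst ≠ v := by
  induction p with
  | nil => simp at hd
  | @cons u c v hadj q ih =>
    simp only [SimpleGraph.Walk.darts_cons, List.mem_cons] at hd
    simp only [SimpleGraph.Walk.support_cons, List.nodup_cons] at h
    rcases hd with rfl | hd
    · intro hv
      exact h.1 (hv ▸ q.end_mem_support)
    · exact ih h.2 hd

lemma dart_fst_inj {T : SimpleGraph V} {u v : V} {p : T.Walk u v}
    (h : p.support.Nodup) {d₁ d₂ : T.Dart} (h₁ : d₁ ∈ p.darts) (h₂ : d₂ ∈ p.darts)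
    (he : d₁.fst = d₂.fst) : d₁ = d₂ := by
  induction p with
  | nil => simp at h₁
  | @cons u c v hadj q ih =>
    simp only [SimpleGraph.Walk.darts_cons, List.mem_cons] at h₁ h₂
    simp only [SimpleGraph.Walk.support_cons, List.nodup_cons] at h
    rcases h₁ with rfl | h₁ <;> rcases h₂ with rfl | h₂
    · rfl
    · exact absurd (show u ∈ q.support by
        have := q.dart_fst_mem_support_of_mem_darts h₂; rwa [← he] at this) h.1
    · exact absurd (show u ∈ q.support by
        have := q.dart_fst_mem_support_of_mem_darts h₁; rwa [he] at this) h.1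
    · exact ih h.2 h₁ h₂

lemma exists_dart_fst {T : SimpleGraph V} {u v : V} (p : T.Walk u v) {x : V}
    (hx : x ∈ p.support) (hxv : x ≠ v) : ∃ d ∈ p.darts, d.fst = x := by
  induction p with
  | nil =>
    simp only [SimpleGraph.Walk.support_nil, List.mem_singleton] at hx
    exact absurd hx hxv
  | @cons u c v hadj q ih =>
    simp only [SimpleGraph.Walk.support_cons, List.mem_cons] at hx
    rcases hx with rfl | hx
    · exact ⟨⟨(x, c), hadj⟩, by simp, rfl⟩
    · obtain ⟨d, hd, hdx⟩ := ih hx hxv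
      exact ⟨d, by simp [hd], hdx⟩



lemma sum_out [Fintype V] {G T : SimpleGraph V} [DecidableRel G.Adj] (hTG : T ≤ G)
    {u v : V} {p : T.Walk u v} (hp : p.IsPath) (x : V) :
    ∑ b ∈ Finset.univ.filter (fun b => G.Adj x b),
      (if ∃ d ∈ p.darts, d.toProd = (x, b) then (1:ℝ) else 0)
      = if x ∈ p.support ∧ x ≠ v then 1 else 0 := by
  classical
  by_cases hex : x ∈ p.support ∧ x ≠ v
  · obtain ⟨d, hd, hdx⟩ := exists_dart_fst p hex.1 hex.2
    have huniq : ∀ b : V, (∃ d' ∈ p.darts, d'.toProd = (x, b)) ↔ b = d.snd := by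
      intro b
      constructor
      · rintro ⟨d', hd', hb⟩
        have hfst : d'.fst = d.fst := by
          rw [show d'.fst = (x : V) from congrArg Prod.fst hb, hdx]
        have : d' = d := dart_fst_inj hp.support_nodup hd' hd hfst
        subst this
        exact (congrArg Prod.snd hb).symm
      · rintro rfl
        exact ⟨d, hd, Prod.ext hdx rfl⟩
    rw [if_pos hex]
    calc ∑ b ∈ Finset.univ.filter (fun b => G.Adj x b),
          (if ∃ d' ∈ p.darts, d'.toProd = (x, b) then (1:ℝ) else 0)
        = ∑ b ∈ Finset.univ.filter (fun b => G.Adj x b),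
          (if b = d.snd then (1:ℝ) else 0) := by
          refine Finset.sum_congr rfl fun b _ => by simp only [huniq b]
      _ = 1 := by
          rw [Finset.sum_ite_eq']
          rw [if_pos]
          simp only [Finset.mem_filter, Finset.mem_univ, true_and]
          exact hTG (hdx ▸ d.adj)
  · rw [if_neg hex]
    refine Finset.sum_eq_zero fun b _ => ?_
    rw [if_neg]
    rintro ⟨d, hd, hdb⟩
    have hfst : d.fst = x := congrArg Prod.fst hdb
    exact hex ⟨hfst ▸ p.dart_fst_mem_support_of_mem_darts hd,
      hfst ▸ dart_fst_ne_end hp.support_nodup hd⟩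

lemma mem_darts_reverse {T : SimpleGraph V} {u v : V} {p : T.Walk u v} {d : T.Dart} :
    d ∈ p.reverse.darts ↔ d.symm ∈ p.darts := by
  rw [SimpleGraph.Walk.darts_reverse, List.mem_reverse, List.mem_map]
  constructor
  · rintro ⟨a, ha, rfl⟩; simpa using ha
  · intro h; exact ⟨d.symm, h, by simp⟩

lemma sum_in [Fintype V] {G T : SimpleGraph V} [DecidableRel G.Adj] (hTG : T ≤ G)
    {u v : V} {p : T.Walk u v} (hp : p.IsPath) (x : V) :
    ∑ b ∈ Finset.univ.filter (fun b => G.Adj x b),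
      (if ∃ d ∈ p.darts, d.toProd = (b, x) then (1:ℝ) else 0)
      = if x ∈ p.support ∧ x ≠ u then 1 else 0 := by
  classical
  have hcond : ∀ b : V, (∃ d ∈ p.darts, d.toProd = (b, x)) ↔
      (∃ d ∈ p.reverse.darts, d.toProd = (x, b)) := by
    intro b
    constructor
    · rintro ⟨d, hd, hdb⟩
      refine ⟨d.symm, mem_darts_reverse.2 (by simpa using hd), ?_⟩
      have : d.symm.toProd = d.toProd.swap := rfl
      rw [this, hdb]; rfl
    · rintro ⟨d, hd, hdb⟩
      refine ⟨d.symm, mem_darts_reverse.1 (by simpa using hd), ?_⟩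
      have : d.symm.toProd = d.toProd.swap := rfl
      rw [this, hdb]; rfl
  calc ∑ b ∈ Finset.univ.filter (fun b => G.Adj x b),
        (if ∃ d ∈ p.darts, d.toProd = (b, x) then (1:ℝ) else 0)
      = ∑ b ∈ Finset.univ.filter (fun b => G.Adj x b),
        (if ∃ d ∈ p.reverse.darts, d.toProd = (x, b) then (1:ℝ) else 0) := by
        refine Finset.sum_congr rfl fun b _ => by simp only [hcond b]
    _ = if x ∈ p.reverse.support ∧ x ≠ u then 1 else 0 := sum_out hTG hp.reverse x
    _ = if x ∈ p.support ∧ x ≠ u then 1 else 0 := by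
        rw [SimpleGraph.Walk.support_reverse]
        simp [List.mem_reverse]

lemma divergence [Fintype V] {G T : SimpleGraph V} [DecidableRel G.Adj] (hTG : T ≤ G)
    {s t : V} (hst : s ≠ t) {p : T.Walk s t} (hp : p.IsPath) (v : V) :
    ∑ b ∈ Finset.univ.filter (fun b => G.Adj v b),
      ((if ∃ d ∈ p.darts, d.toProd = (v, b) then (1:ℝ) else 0)
        - (if ∃ d ∈ p.darts, d.toProd = (b, v) then (1:ℝ) else 0))
      = if v = s then 1 else if v = t then -1 else 0 := by
  rw [Finset.sum_sub_distrib, sum_out hTG hp v, sum_in hTG hp v]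
  by_cases hvs : v = s
  · subst hvs
    rw [if_pos ⟨p.start_mem_support, hst⟩, if_neg (by simp), if_pos rfl]
    norm_num
  · by_cases hvt : v = t
    · subst hvt
      rw [if_neg (by simp), if_pos ⟨p.end_mem_support, hvs⟩, if_neg hvs, if_pos rfl]
      norm_num
    · rw [if_neg hvs, if_neg hvt]
      by_cases hv : v ∈ p.support
      · rw [if_pos ⟨hv, hvt⟩, if_pos ⟨hv, hvs⟩]; norm_num
      · rw [if_neg (by tauto), if_neg (by tauto)]; norm_num


lemma ncard_as_sum [Fintype V] [DecidableEq V] (p : SimpleGraph V → Prop) :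
    (Set.ncard {T : SimpleGraph V | p T} : ℝ)
      = ∑ T : SimpleGraph V, if p T then (1:ℝ) else 0 := by
  classical
  rw [Set.ncard_eq_toFinset_card', Set.toFinset_setOf, Finset.card_filter]
  push_cast
  rfl

lemma traverses_iff {T : SimpleGraph V} (hT : T.IsTree) {s t : V}
    {p₀ : T.Walk s t} (hp₀ : p₀.IsPath) (hu : ∀ q : T.Walk s t, q.IsPath → q = p₀)
    (a b : V) :
    PathTraverses T s t a b ↔ ∃ d ∈ p₀.darts, d.toProd = (a, b) := by
  constructor
  · rintro ⟨p, hp, hd⟩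
    rwa [hu p hp] at hd
  · intro hd
    exact ⟨p₀, hp₀, hd⟩

lemma current_law [Fintype V] [DecidableEq V] (G : SimpleGraph V) [DecidableRel G.Adj]
    {s t : V} (hst : s ≠ t) (v : V) :
    ∑ b ∈ Finset.univ.filter (fun b => G.Adj v b),
      ((Set.ncard {T : SimpleGraph V | IsSpanningTreeOf T G ∧ PathTraverses T s t v b} : ℝ)
       - (Set.ncard {T : SimpleGraph V | IsSpanningTreeOf T G ∧ PathTraverses T s t b v} : ℝ))
    = (if v = s then 1 else if v = t then -1 else 0)
        * (Set.ncard {T : SimpleGraph V | IsSpanningTreeOf T G} : ℝ) := by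
  classical
  have key : ∀ T : SimpleGraph V,
      ∑ b ∈ Finset.univ.filter (fun b => G.Adj v b),
        ((if IsSpanningTreeOf T G ∧ PathTraverses T s t v b then (1:ℝ) else 0)
          - (if IsSpanningTreeOf T G ∧ PathTraverses T s t b v then (1:ℝ) else 0))
      = (if v = s then 1 else if v = t then -1 else 0)
          * (if IsSpanningTreeOf T G then (1:ℝ) else 0) := by
    intro T
    by_cases hT : IsSpanningTreeOf T G
    · obtain ⟨p₀, hp₀, hu⟩ := hT.2.existsUnique_path s t
      have h1 : ∀ b, (IsSpanningTreeOf T G ∧ PathTraverses T s t v b)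
          ↔ ∃ d ∈ p₀.darts, d.toProd = (v, b) := fun b => by
        rw [traverses_iff hT.2 hp₀ hu]; exact and_iff_right hT
      have h2 : ∀ b, (IsSpanningTreeOf T G ∧ PathTraverses T s t b v)
          ↔ ∃ d ∈ p₀.darts, d.toProd = (b, v) := fun b => by
        rw [traverses_iff hT.2 hp₀ hu]; exact and_iff_right hT
      rw [if_pos hT, mul_one]
      calc ∑ b ∈ Finset.univ.filter (fun b => G.Adj v b),
          ((if IsSpanningTreeOf T G ∧ PathTraverses T s t v b then (1:ℝ) else 0)
            - (if IsSpanningTreeOf T G ∧ PathTraverses T s t b v then (1:ℝ) else 0))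
          = ∑ b ∈ Finset.univ.filter (fun b => G.Adj v b),
            ((if ∃ d ∈ p₀.darts, d.toProd = (v, b) then (1:ℝ) else 0)
              - (if ∃ d ∈ p₀.darts, d.toProd = (b, v) then (1:ℝ) else 0)) := by
            refine Finset.sum_congr rfl fun b _ => by simp only [h1 b, h2 b]
        _ = _ := by convert divergence hT.1 hst hp₀ v using 2 <;> congr!
    · rw [if_neg hT, mul_zero]
      refine Finset.sum_eq_zero fun b _ => ?_
      rw [if_neg (fun h => hT h.1), if_neg (fun h => hT h.1), sub_zero]
  calc ∑ b ∈ Finset.univ.filter (fun b => G.Adj v b),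
      ((Set.ncard {T : SimpleGraph V | IsSpanningTreeOf T G ∧ PathTraverses T s t v b} : ℝ)
       - (Set.ncard {T : SimpleGraph V | IsSpanningTreeOf T G ∧ PathTraverses T s t b v} : ℝ))
      = ∑ b ∈ Finset.univ.filter (fun b => G.Adj v b), ∑ T : SimpleGraph V,
        ((if IsSpanningTreeOf T G ∧ PathTraverses T s t v b then (1:ℝ) else 0)
          - (if IsSpanningTreeOf T G ∧ PathTraverses T s t b v then (1:ℝ) else 0)) := by
        refine Finset.sum_congr rfl fun b _ => ?_
        rw [ncard_as_sum, ncard_as_sum, Finset.sum_sub_distrib]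
        congr!
    _ = ∑ T : SimpleGraph V, ∑ b ∈ Finset.univ.filter (fun b => G.Adj v b),
        ((if IsSpanningTreeOf T G ∧ PathTraverses T s t v b then (1:ℝ) else 0)
          - (if IsSpanningTreeOf T G ∧ PathTraverses T s t b v then (1:ℝ) else 0)) :=
        Finset.sum_comm
    _ = ∑ T : SimpleGraph V, (if v = s then 1 else if v = t then -1 else 0)
          * (if IsSpanningTreeOf T G then (1:ℝ) else 0) :=
        Finset.sum_congr rfl fun T _ => key T
    _ = _ := by rw [← Finset.mul_sum, ncard_as_sum]



lemma reach_split {H : SimpleGraph V} {a b : V} {u v : V} (w : H.Walk u v) :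
    (H.deleteEdges {s(a,b)}).Reachable u v
    ∨ ((H.deleteEdges {s(a,b)}).Reachable u a ∧ (H.deleteEdges {s(a,b)}).Reachable b v)
    ∨ ((H.deleteEdges {s(a,b)}).Reachable u b ∧ (H.deleteEdges {s(a,b)}).Reachable a v) := by
  induction w with
  | nil => exact Or.inl (Reachable.refl _)
  | @cons u c v h q ih =>
    by_cases he : s(u,c) = s(a,b)
    · rw [Sym2.eq_iff] at he
      rcases he with ⟨rfl, rfl⟩ | ⟨rfl, rfl⟩
      · rcases ih with h1 | ⟨h2a, h2b⟩ | ⟨h3a, h3b⟩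
        · exact Or.inr (Or.inl ⟨Reachable.refl _, h1⟩)
        · exact Or.inr (Or.inr ⟨h2a.symm, h2a.symm.trans h2b⟩)
        · exact Or.inl h3b
      · rcases ih with h1 | ⟨h2a, h2b⟩ | ⟨h3a, h3b⟩
        · exact Or.inr (Or.inr ⟨Reachable.refl _, h1⟩)
        · exact Or.inl h2b
        · exact Or.inr (Or.inl ⟨h3a.symm, h3a.symm.trans h3b⟩)
    · have h' : (H.deleteEdges {s(a,b)}).Adj u c := by
        rw [deleteEdges_adj]; exact ⟨h, by simpa using he⟩
      rcases ih with h1 | ⟨h2a, h2b⟩ | ⟨h3a, h3b⟩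
      · exact Or.inl (h'.reachable.trans h1)
      · exact Or.inr (Or.inl ⟨h'.reachable.trans h2a, h2b⟩)
      · exact Or.inr (Or.inr ⟨h'.reachable.trans h3a, h3b⟩)

lemma not_reach_delete {T : SimpleGraph V} (hT : T.IsAcyclic) {a b : V} (hab : T.Adj a b) :
    ¬(T.deleteEdges {s(a,b)}).Reachable a b := by
  have h := (isAcyclic_iff_forall_adj_isBridge.mp hT) hab
  rw [isBridge_iff] at h
  exact h

lemma reach_of_dart {T : SimpleGraph V} {a b : V} {u v : V} (p : T.Walk u v) (hp : p.IsPath)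
    {d : T.Dart} (hd : d ∈ p.darts) (hab : d.toProd = (a, b)) :
    (T.deleteEdges {s(a,b)}).Reachable u a ∧ (T.deleteEdges {s(a,b)}).Reachable b v := by
  induction p with
  | nil => simp at hd
  | @cons u c v h q ih =>
    rw [SimpleGraph.Walk.darts_cons, List.mem_cons] at hd
    have hq : q.IsPath := hp.of_cons
    have hnodup := hp.edges_nodup
    rw [SimpleGraph.Walk.edges_cons, List.nodup_cons] at hnodup
    rcases hd with rfl | hd
    · obtain ⟨rfl, rfl⟩ : u = a ∧ c = b := by simpa using hab
      refine ⟨Reachable.refl _, ⟨q.toDeleteEdges _ fun e he => ?_⟩⟩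
      simp only [Set.mem_singleton_iff]
      intro hcontra
      exact hnodup.1 (hcontra ▸ he)
    · obtain ⟨h1, h2⟩ := ih hq hd
      have hedge : s(a,b) ∈ q.edges := by
        have hmem : d.edge ∈ q.edges := List.mem_map_of_mem (f := SimpleGraph.Dart.edge) hd
        have : d.edge = s(a,b) := by
          show s(d.toProd.1, d.toProd.2) = _
          rw [hab]
        rwa [this] at hmem
      have hne : s(u,c) ≠ s(a,b) := fun hcontra => hnodup.1 (hcontra ▸ hedge)
      have h' : (T.deleteEdges {s(a,b)}).Adj u c := by
        rw [deleteEdges_adj]; exact ⟨h, by simpa using hne⟩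
      exact ⟨h'.reachable.trans h1, h2⟩

lemma reach_of_mem_support {H : SimpleGraph V} {u v x : V} (p : H.Walk u v)
    (hx : x ∈ p.support) : H.Reachable u x := by
  induction p with
  | nil => simp only [SimpleGraph.Walk.support_nil, List.mem_singleton] at hx; exact hx ▸ Reachable.refl _
  | @cons u c v h q ih =>
    rw [SimpleGraph.Walk.support_cons, List.mem_cons] at hx
    rcases hx with rfl | hx
    · exact Reachable.refl _
    · exact h.reachable.trans (ih hx)

lemma traverses_of_reach {T : SimpleGraph V} (hT : T.IsAcyclic) {s t a b : V}
    (hab : T.Adj a b)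
    (hsa : (T.deleteEdges {s(a,b)}).Reachable s a)
    (htb : (T.deleteEdges {s(a,b)}).Reachable t b) :
    PathTraverses T s t a b := by
  have hnab : ¬(T.deleteEdges {s(a,b)}).Reachable a b := not_reach_delete hT hab
  obtain ⟨q₀⟩ := hsa
  obtain ⟨r₀⟩ := htb
  obtain ⟨qq, hqq⟩ := q₀.toPath
  obtain ⟨rr', hrr'⟩ := r₀.toPath
  set rr := rr'.reverse with hrrdef
  have hrr : rr.IsPath := hrr'.reverse
  have hdisj : ∀ x, x ∈ qq.support → x ∈ rr.support → False := by
    intro x hxq hxr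
    have hax : (T.deleteEdges {s(a,b)}).Reachable a x :=
      reach_of_mem_support qq.reverse (by rwa [SimpleGraph.Walk.support_reverse, List.mem_reverse])
    have hbx : (T.deleteEdges {s(a,b)}).Reachable b x := reach_of_mem_support rr hxr
    exact hnab (hax.trans hbx.symm)
  have hqe : ∀ e ∈ qq.edges, e ∈ T.edgeSet :=
    fun e he => edgeSet_mono (deleteEdges_le _) (qq.edges_subset_edgeSet he)
  have hre : ∀ e ∈ rr.edges, e ∈ T.edgeSet :=
    fun e he => edgeSet_mono (deleteEdges_le _) (rr.edges_subset_edgeSet he)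
  refine ⟨(qq.transfer T hqe).append (SimpleGraph.Walk.cons hab (rr.transfer T hre)), ?_, ?_⟩
  · rw [SimpleGraph.Walk.isPath_def, SimpleGraph.Walk.support_append,
      SimpleGraph.Walk.support_cons, List.tail_cons, SimpleGraph.Walk.support_transfer,
      SimpleGraph.Walk.support_transfer]
    exact List.Nodup.append hqq.support_nodup hrr.support_nodup
      (fun x hx hx' => hdisj x hx hx')
  · refine ⟨⟨(a, b), hab⟩, ?_, rfl⟩
    rw [SimpleGraph.Walk.darts_append, List.mem_append, SimpleGraph.Walk.darts_cons]
    exact Or.inr List.mem_cons_self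



def Forest2 (G : SimpleGraph V) (s t : V) (F : SimpleGraph V) : Prop :=
  F ≤ G ∧ F.IsAcyclic ∧ ¬F.Reachable s t ∧ ∀ v, F.Reachable s v ∨ F.Reachable t v

lemma isAcyclic_anti {H T : SimpleGraph V} (hle : H ≤ T) (hT : T.IsAcyclic) : H.IsAcyclic :=
  fun _ c hc => hT (c.mapLe hle) ((SimpleGraph.Walk.mapLe_isCycle hle).mpr hc)

lemma delete_sup_eq {T : SimpleGraph V} {a b : V} (hab : T.Adj a b) :
    T.deleteEdges {s(a,b)} ⊔ fromEdgeSet {s(a,b)} = T := by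
  ext x y
  simp only [sup_adj, deleteEdges_adj, fromEdgeSet_adj, Set.mem_singleton_iff]
  constructor
  · rintro (⟨h, _⟩ | ⟨he, _⟩)
    · exact h
    · rw [Sym2.eq_iff] at he
      rcases he with ⟨rfl, rfl⟩ | ⟨rfl, rfl⟩
      · exact hab
      · exact hab.symm
  · intro h
    by_cases he : s(x,y) = s(a,b)
    · exact Or.inr ⟨he, h.ne⟩
    · exact Or.inl ⟨h, he⟩

lemma sup_delete_eq {F : SimpleGraph V} {a b : V} (hnadj : ¬F.Adj a b) :
    (F ⊔ fromEdgeSet {s(a,b)}).deleteEdges {s(a,b)} = F := by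
  ext x y
  simp only [deleteEdges_adj, sup_adj, fromEdgeSet_adj, Set.mem_singleton_iff]
  constructor
  · rintro ⟨h | ⟨he, _⟩, hne'⟩
    · exact h
    · exact absurd he hne'
  · intro h
    refine ⟨Or.inl h, ?_⟩
    intro he
    rw [Sym2.eq_iff] at he
    rcases he with ⟨rfl, rfl⟩ | ⟨rfl, rfl⟩
    · exact hnadj h
    · exact hnadj h.symm

lemma mapsTo_del {G : SimpleGraph V} {s t a b : V}
    {T : SimpleGraph V} (hT : IsSpanningTreeOf T G) (htrav : PathTraverses T s t a b) :
    Forest2 G s t (T.deleteEdges {s(a,b)})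
      ∧ (T.deleteEdges {s(a,b)}).Reachable s a ∧ (T.deleteEdges {s(a,b)}).Reachable t b
      ∧ T.Adj a b := by
  obtain ⟨p, hp, d, hd, hdp⟩ := htrav
  have hTab : T.Adj a b := by
    have h := d.adj
    rw [show d.toProd.1 = a from by rw [hdp], show d.toProd.2 = b from by rw [hdp]] at h
    exact h
  obtain ⟨hsa, hbt⟩ := reach_of_dart p hp hd hdp
  have hDle : T.deleteEdges {s(a,b)} ≤ T := deleteEdges_le _
  have hnab : ¬(T.deleteEdges {s(a,b)}).Reachable a b := not_reach_delete hT.2.2 hTab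
  have htb : (T.deleteEdges {s(a,b)}).Reachable t b := hbt.symm
  have htot : ∀ v, (T.deleteEdges {s(a,b)}).Reachable s v
      ∨ (T.deleteEdges {s(a,b)}).Reachable t v := by
    intro v
    obtain ⟨w⟩ := hT.2.1.preconnected a v
    rcases reach_split (a := a) (b := b) w with h1 | ⟨h2a, h2b⟩ | ⟨h3a, h3b⟩
    · exact Or.inl (hsa.trans h1)
    · exact Or.inr (htb.trans h2b)
    · exact absurd h3a hnab
  have hnst : ¬(T.deleteEdges {s(a,b)}).Reachable s t :=
    fun h => hnab ((hsa.symm.trans h).trans htb)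
  exact ⟨⟨hDle.trans hT.1, isAcyclic_anti hDle hT.2.2, hnst, htot⟩, hsa, htb, hTab⟩

lemma mapsTo_sup {G : SimpleGraph V} {s t a b : V} (hab : G.Adj a b)
    {F : SimpleGraph V} (hF : Forest2 G s t F)
    (hsa : F.Reachable s a) (htb : F.Reachable t b) :
    IsSpanningTreeOf (F ⊔ fromEdgeSet {s(a,b)}) G
      ∧ PathTraverses (F ⊔ fromEdgeSet {s(a,b)}) s t a b
      ∧ (F ⊔ fromEdgeSet {s(a,b)}).deleteEdges {s(a,b)} = F := by
  obtain ⟨hFG, hFacy, hFnst, hFtot⟩ := hF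
  have hne : a ≠ b := hab.ne
  have hnFRab : ¬F.Reachable a b := fun h => hFnst (hsa.trans (h.trans htb.symm))
  have hnFab : ¬F.Adj a b := fun h => hnFRab h.reachable
  set T := F ⊔ fromEdgeSet {s(a,b)} with hTdef
  have hTab : T.Adj a b := by
    rw [hTdef, sup_adj, fromEdgeSet_adj]
    exact Or.inr ⟨rfl, hne⟩
  have hTG : T ≤ G := by
    rw [hTdef]
    refine sup_le hFG ?_
    intro x y hxy
    rw [fromEdgeSet_adj, Set.mem_singleton_iff, Sym2.eq_iff] at hxy
    rcases hxy.1 with ⟨rfl, rfl⟩ | ⟨rfl, rfl⟩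
    · exact hab
    · exact hab.symm
  have hFT : F ≤ T := le_sup_left
  have hback : T.deleteEdges {s(a,b)} = F := sup_delete_eq hnFab
  have hpre : T.Preconnected := by
    intro u v
    have hsR : T.Reachable s t :=
      ((hsa.mono hFT).trans hTab.reachable).trans (htb.mono hFT).symm
    rcases hFtot u with hu | hu <;> rcases hFtot v with hv | hv
    · exact (hu.mono hFT).symm.trans (hv.mono hFT)
    · exact (hu.mono hFT).symm.trans (hsR.trans (hv.mono hFT))
    · exact (hu.mono hFT).symm.trans (hsR.symm.trans (hv.mono hFT))
    · exact (hu.mono hFT).symm.trans (hv.mono hFT)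
  haveI : Nonempty V := ⟨s⟩
  have hconn : T.Connected := ⟨hpre⟩
  have hacy : T.IsAcyclic := by
    rw [isAcyclic_iff_forall_adj_isBridge]
    intro x y hxy
    rw [isBridge_iff]
    intro hreach
    rcases (by rwa [hTdef, sup_adj] at hxy :
        F.Adj x y ∨ (fromEdgeSet {s(a,b)}).Adj x y) with hFxy | hexy
    · have hxyne : s(x,y) ≠ s(a,b) := by
        intro h
        rw [Sym2.eq_iff] at h
        rcases h with ⟨rfl, rfl⟩ | ⟨rfl, rfl⟩
        · exact hnFab hFxy
        · exact hnFab hFxy.symm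
      have hFbridge := (isAcyclic_iff_forall_adj_isBridge.mp hFacy) hFxy
      rw [isBridge_iff] at hFbridge
      have hFbr : ¬(F.deleteEdges {s(x,y)}).Reachable x y := hFbridge
      obtain ⟨w⟩ := hreach
      have hle2 : (T.deleteEdges {s(x,y)}).deleteEdges {s(a,b)} ≤ F.deleteEdges {s(x,y)} := by
        intro p q hpq
        simp only [deleteEdges_adj, Set.mem_singleton_iff] at hpq ⊢
        obtain ⟨⟨hT', hne1⟩, hne2⟩ := hpq
        refine ⟨?_, hne1⟩
        rcases (by rwa [hTdef, sup_adj] at hT' :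
            F.Adj p q ∨ (fromEdgeSet {s(a,b)}).Adj p q) with h | h
        · exact h
        · rw [fromEdgeSet_adj, Set.mem_singleton_iff] at h
          exact absurd h.1 hne2
      rcases reach_split (a := a) (b := b) w with h1 | ⟨h2a, h2b⟩ | ⟨h3a, h3b⟩
      · exact hFbr (h1.mono hle2)
      · have hXa : F.Reachable x a := (h2a.mono hle2).mono (deleteEdges_le _)
        have hBy : F.Reachable b y := (h2b.mono hle2).mono (deleteEdges_le _)
        exact hnFRab ((hXa.symm.trans hFxy.reachable).trans hBy.symm)
      · have hXb : F.Reachable x b := (h3a.mono hle2).mono (deleteEdges_le _)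
        have hAy : F.Reachable a y := (h3b.mono hle2).mono (deleteEdges_le _)
        exact hnFRab ((hAy.trans hFxy.reachable.symm).trans hXb)
    · rw [fromEdgeSet_adj, Set.mem_singleton_iff] at hexy
      have hre : F.Reachable x y := by
        have h2 : (T.deleteEdges {s(a,b)}).Reachable x y := by rwa [hexy.1] at hreach
        rwa [hback] at h2
      rcases Sym2.eq_iff.mp hexy.1 with ⟨rfl, rfl⟩ | ⟨rfl, rfl⟩
      · exact hnFRab hre
      · exact hnFRab hre.symm
  refine ⟨⟨hTG, hconn, hacy⟩, ?_, hback⟩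
  apply traverses_of_reach hacy hTab
  · rw [hback]; exact hsa
  · rw [hback]; exact htb



lemma ncard_eq {G : SimpleGraph V} {s t a b : V} (hab : G.Adj a b) :
    Set.ncard {T : SimpleGraph V | IsSpanningTreeOf T G ∧ PathTraverses T s t a b}
      = Set.ncard {F : SimpleGraph V | Forest2 G s t F ∧ F.Reachable s a ∧ F.Reachable t b} := by
  have hbij : Set.BijOn (fun T : SimpleGraph V => T.deleteEdges {s(a,b)})
      {T : SimpleGraph V | IsSpanningTreeOf T G ∧ PathTraverses T s t a b}
      {F : SimpleGraph V | Forest2 G s t F ∧ F.Reachable s a ∧ F.Reachable t b} := by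
    refine ⟨?_, ?_, ?_⟩
    · rintro T ⟨hT, htrav⟩
      obtain ⟨hF, h1, h2, _⟩ := mapsTo_del hT htrav
      exact ⟨hF, h1, h2⟩
    · rintro T₁ ⟨hT₁, ht₁⟩ T₂ ⟨hT₂, ht₂⟩ heq
      have h1 := (mapsTo_del hT₁ ht₁).2.2.2
      have h2 := (mapsTo_del hT₂ ht₂).2.2.2
      rw [← delete_sup_eq h1, ← delete_sup_eq h2]
      simp only at heq
      rw [heq]
    · rintro F ⟨hF, h1, h2⟩
      obtain ⟨hsp, htrav, hback⟩ := mapsTo_sup hab hF h1 h2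
      exact ⟨F ⊔ fromEdgeSet {s(a,b)}, ⟨hsp, htrav⟩, hback⟩
  rw [← hbij.image_eq, Set.ncard_image_of_injOn hbij.injOn]

lemma flow_eq_potential [Fintype V] [DecidableEq V] {G : SimpleGraph V} {s t a b : V}
    (hab : G.Adj a b) :
    (Set.ncard {T : SimpleGraph V | IsSpanningTreeOf T G ∧ PathTraverses T s t a b} : ℝ)
      - (Set.ncard {T : SimpleGraph V | IsSpanningTreeOf T G ∧ PathTraverses T s t b a} : ℝ)
    = (Set.ncard {F : SimpleGraph V | Forest2 G s t F ∧ F.Reachable s a} : ℝ)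
      - (Set.ncard {F : SimpleGraph V | Forest2 G s t F ∧ F.Reachable s b} : ℝ) := by
  rw [ncard_eq hab, ncard_eq hab.symm]
  have hsplit : ∀ x y : V,
      Set.ncard {F : SimpleGraph V | Forest2 G s t F ∧ F.Reachable s x}
      = Set.ncard {F : SimpleGraph V | Forest2 G s t F ∧ F.Reachable s x ∧ F.Reachable s y}
        + Set.ncard {F : SimpleGraph V | Forest2 G s t F ∧ F.Reachable s x ∧ F.Reachable t y} := by
    intro x y
    have hunion : {F : SimpleGraph V | Forest2 G s t F ∧ F.Reachable s x}
        = {F : SimpleGraph V | Forest2 G s t F ∧ F.Reachable s x ∧ F.Reachable s y}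
          ∪ {F : SimpleGraph V | Forest2 G s t F ∧ F.Reachable s x ∧ F.Reachable t y} := by
      ext F
      simp only [Set.mem_setOf_eq, Set.mem_union]
      constructor
      · rintro ⟨hF, hx⟩
        rcases hF.2.2.2 y with h | h
        · exact Or.inl ⟨hF, hx, h⟩
        · exact Or.inr ⟨hF, hx, h⟩
      · rintro (⟨hF, hx, _⟩ | ⟨hF, hx, _⟩) <;> exact ⟨hF, hx⟩
    rw [hunion, Set.ncard_union_eq ?_ (Set.toFinite _) (Set.toFinite _)]
    rw [Set.disjoint_left]
    rintro F ⟨hF, _, hsy⟩ ⟨_, _, hty⟩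
    exact hF.2.2.1 (hsy.trans hty.symm)
  have h1 := hsplit a b
  have h2 := hsplit b a
  have hcomm : {F : SimpleGraph V | Forest2 G s t F ∧ F.Reachable s b ∧ F.Reachable s a}
      = {F : SimpleGraph V | Forest2 G s t F ∧ F.Reachable s a ∧ F.Reachable s b} := by
    ext F; simp only [Set.mem_setOf_eq]; tauto
  rw [h1, h2, hcomm]
  push_cast
  ring


end KirchAux

theorem spanning_tree_flow_satisfies_kirchhoff_laws
    [Fintype V] [DecidableEq V]
    (G : SimpleGraph V) [DecidableRel G.Adj] (hG : G.Connected)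
    (s t : V) (hst : s ≠ t)
    (N : ℕ) (hN : N = Set.ncard {T : SimpleGraph V | IsSpanningTreeOf T G})
    (hNpos : 0 < N)
    (Nst : V → V → ℕ)
    (hNst : ∀ a b, Nst a b =
      Set.ncard {T : SimpleGraph V | IsSpanningTreeOf T G ∧ PathTraverses T s t a b})
    (f : V → V → ℝ)
    (hf : ∀ a b, f a b = ((Nst a b : ℝ) - (Nst b a : ℝ)) / (N : ℝ)) :
    -- (i) Kirchhoff's current law: unit flow from `s` to `t`
    (∀ v : V, ∑ b ∈ Finset.univ.filter (fun b => G.Adj v b), f v b =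
      if v = s then 1 else if v = t then -1 else 0) ∧
    -- (ii) Kirchhoff's voltage law along every closed walk (unit resistances)
    (∀ v : V, ∀ w : G.Walk v v,
      (w.darts.map (fun d => f d.toProd.1 d.toProd.2)).sum = 0) := by
  have hNne : (N : ℝ) ≠ 0 := Nat.cast_ne_zero.mpr hNpos.ne'
  constructor
  · intro v
    have hcl := KirchAux.current_law G hst v
    have hstep : ∑ b ∈ Finset.univ.filter (fun b => G.Adj v b), f v b
        = (∑ b ∈ Finset.univ.filter (fun b => G.Adj v b),
            ((Set.ncard {T : SimpleGraph V | IsSpanningTreeOf T G ∧ PathTraverses T s t v b} : ℝ)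
              - (Set.ncard {T : SimpleGraph V |
                  IsSpanningTreeOf T G ∧ PathTraverses T s t b v} : ℝ))) / (N : ℝ) := by
      rw [Finset.sum_div]
      refine Finset.sum_congr rfl fun b _ => ?_
      rw [hf, hNst, hNst]
    rw [hstep, hcl, ← hN, mul_div_assoc, div_self hNne, mul_one]
  · intro v w
    have hfφ : ∀ a b : V, G.Adj a b → f a b =
        ((Set.ncard {F : SimpleGraph V | KirchAux.Forest2 G s t F ∧ F.Reachable s a} : ℝ)
          - (Set.ncard {F : SimpleGraph V | KirchAux.Forest2 G s t F ∧ F.Reachable s b} : ℝ))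
          / (N : ℝ) := by
      intro a b hab
      rw [hf, hNst, hNst, KirchAux.flow_eq_potential hab]
    have key : ∀ (u x : V) (q : G.Walk u x),
        (q.darts.map (fun d => f d.toProd.1 d.toProd.2)).sum =
        ((Set.ncard {F : SimpleGraph V | KirchAux.Forest2 G s t F ∧ F.Reachable s u} : ℝ)
          - (Set.ncard {F : SimpleGraph V | KirchAux.Forest2 G s t F ∧ F.Reachable s x} : ℝ))
          / (N : ℝ) := by
      intro u x q
      induction q with
      | nil => simp
      | @cons u c x h q ih =>
        rw [SimpleGraph.Walk.darts_cons, List.map_cons, List.sum_cons, ih]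
        have hd : f (⟨(u, c), h⟩ : G.Dart).toProd.1 (⟨(u, c), h⟩ : G.Dart).toProd.2
            = f u c := rfl
        rw [hd, hfφ u c h, ← add_div]
        congr 1
        ring
    rw [key v v w, sub_self, zero_div]
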